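/- arXiv:0906.2448 — 3 statements merged into one kernel-verified Lean document; each statement's English description precedes it below -/
import Mathlib

section
/- Let p : [0,1] → ℝ≥0 be a unimodal function (i.e., there exists t_max such that p is nondecreasing on [0,t_max] and nonincreasing on [t_max,1]) and let 0 ≤ α < β ≤ 1. Then ∫_α^β p(t) dt ≥ (β - α) · min{∫_0^α p(t) dt, ∫_β^1 p(t) dt}. -/
open MeasureTheory Set

lemma const_le_integral' {p : ℝ → ℝ} {a b c : ℝ} (hab : a ≤ b)
    (hi : IntervalIntegrable p volume a b) (h : ∀ t ∈ Icc a b, c ≤ p t) :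
    (b - a) * c ≤ ∫ t in a..b, p t := by
  have := intervalIntegral.integral_mono_on hab (intervalIntegrable_const (c := c)) hi
    (fun x hx => h x hx)
  simpa [smul_eq_mul] using this

lemma integral_le_const' {p : ℝ → ℝ} {a b c : ℝ} (hab : a ≤ b)
    (hi : IntervalIntegrable p volume a b) (h : ∀ t ∈ Icc a b, p t ≤ c) :
    (∫ t in a..b, p t) ≤ (b - a) * c := by
  have := intervalIntegral.integral_mono_on hab hi (intervalIntegrable_const (c := c))
    (fun x hx => h x hx)
  simpa [smul_eq_mul] using this

theorem unimodal_interval_isoperimetry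
    (p : ℝ → ℝ) (hnn : ∀ t ∈ Icc (0:ℝ) 1, 0 ≤ p t)
    (hint : IntervalIntegrable p volume 0 1)
    (huni : ∃ tmax ∈ Icc (0:ℝ) 1,
      MonotoneOn p (Icc 0 tmax) ∧ AntitoneOn p (Icc tmax 1))
    (α β : ℝ) (hα : 0 ≤ α) (hαβ : α < β) (hβ : β ≤ 1) :
    (β - α) * min (∫ t in (0:ℝ)..α, p t) (∫ t in β..(1:ℝ), p t) ≤
      ∫ t in α..β, p t := by
  obtain ⟨tmax, htm, hmono, hanti⟩ := huni
  have hsub : ∀ a b : ℝ, 0 ≤ a → a ≤ 1 → 0 ≤ b → b ≤ 1 →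
      IntervalIntegrable p volume a b := by
    intro a b ha ha1 hb hb1
    refine hint.mono_set ?_
    refine uIcc_subset_uIcc ?_ ?_ <;> rw [uIcc_of_le zero_le_one]
    · exact ⟨ha, ha1⟩
    · exact ⟨hb, hb1⟩
  set m := min (∫ t in (0:ℝ)..α, p t) (∫ t in β..(1:ℝ), p t) with hm
  have hα1 : α ≤ 1 := le_trans hαβ.le hβ
  have hβ0 : 0 ≤ β := le_trans hα hαβ.le
  rcases le_or_gt tmax α with h1 | h1
  · -- tmax ≤ α : p antitone on [α,1]
    have hpβ : 0 ≤ p β := hnn β ⟨hβ0, hβ⟩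
    have hub : (∫ t in β..(1:ℝ), p t) ≤ (1 - β) * p β := by
      refine integral_le_const' hβ (hsub _ _ hβ0 hβ zero_le_one le_rfl) ?_
      intro t ht
      exact hanti ⟨le_trans h1 hαβ.le, hβ⟩
        ⟨le_trans (le_trans h1 hαβ.le) ht.1, ht.2⟩ ht.1
    have hmle : m ≤ p β := by
      calc m ≤ (∫ t in β..(1:ℝ), p t) := min_le_right _ _
        _ ≤ (1 - β) * p β := hub
        _ ≤ 1 * p β := by nlinarith
        _ = p β := one_mul _
    have hlb : (β - α) * p β ≤ ∫ t in α..β, p t := by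
      refine const_le_integral' hαβ.le (hsub _ _ hα hα1 hβ0 hβ) ?_
      intro t ht
      exact hanti ⟨le_trans h1 ht.1, le_trans ht.2 hβ⟩ ⟨le_trans h1 hαβ.le, hβ⟩ ht.2
    calc (β - α) * m ≤ (β - α) * p β :=
          mul_le_mul_of_nonneg_left hmle (by linarith)
      _ ≤ _ := hlb
  rcases le_or_gt β tmax with h2 | h2
  · -- β ≤ tmax : p monotone on [0,β]
    have hpα : 0 ≤ p α := hnn α ⟨hα, hα1⟩
    have hub : (∫ t in (0:ℝ)..α, p t) ≤ (α - 0) * p α := by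
      refine integral_le_const' hα (hsub _ _ le_rfl zero_le_one hα hα1) ?_
      intro t ht
      exact hmono ⟨ht.1, le_trans ht.2 (le_trans hαβ.le h2)⟩
        ⟨hα, le_trans hαβ.le h2⟩ ht.2
    have hmle : m ≤ p α := by
      calc m ≤ (∫ t in (0:ℝ)..α, p t) := min_le_left _ _
        _ ≤ (α - 0) * p α := hub
        _ ≤ 1 * p α := by nlinarith
        _ = p α := one_mul _
    have hlb : (β - α) * p α ≤ ∫ t in α..β, p t := by
      refine const_le_integral' hαβ.le (hsub _ _ hα hα1 hβ0 hβ) ?_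
      intro t ht
      exact hmono ⟨hα, le_trans hαβ.le h2⟩ ⟨le_trans hα ht.1, le_trans ht.2 h2⟩ ht.1
    calc (β - α) * m ≤ (β - α) * p α :=
          mul_le_mul_of_nonneg_left hmle (by linarith)
      _ ≤ _ := hlb
  · -- α < tmax < β
    have htm0 : 0 ≤ tmax := htm.1
    have htm1 : tmax ≤ 1 := htm.2
    have hpα : 0 ≤ p α := hnn α ⟨hα, hα1⟩
    have hpβ : 0 ≤ p β := hnn β ⟨hβ0, hβ⟩
    have hmα : m ≤ p α := by
      have hub : (∫ t in (0:ℝ)..α, p t) ≤ (α - 0) * p α := by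
        refine integral_le_const' hα (hsub _ _ le_rfl zero_le_one hα hα1) ?_
        intro t ht
        exact hmono ⟨ht.1, le_trans ht.2 h1.le⟩ ⟨hα, h1.le⟩ ht.2
      calc m ≤ (∫ t in (0:ℝ)..α, p t) := min_le_left _ _
        _ ≤ (α - 0) * p α := hub
        _ ≤ 1 * p α := by nlinarith
        _ = p α := one_mul _
    have hmβ : m ≤ p β := by
      have hub : (∫ t in β..(1:ℝ), p t) ≤ (1 - β) * p β := by
        refine integral_le_const' hβ (hsub _ _ hβ0 hβ zero_le_one le_rfl) ?_
        intro t ht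
        exact hanti ⟨h2.le, hβ⟩ ⟨le_trans h2.le ht.1, ht.2⟩ ht.1
      calc m ≤ (∫ t in β..(1:ℝ), p t) := min_le_right _ _
        _ ≤ (1 - β) * p β := hub
        _ ≤ 1 * p β := by nlinarith
        _ = p β := one_mul _
    have hi1 : IntervalIntegrable p volume α tmax := hsub _ _ hα hα1 htm0 htm1
    have hi2 : IntervalIntegrable p volume tmax β := hsub _ _ htm0 htm1 hβ0 hβ
    have hsplit : (∫ t in α..tmax, p t) + (∫ t in tmax..β, p t) = ∫ t in α..β, p t :=
      intervalIntegral.integral_add_adjacent_intervals hi1 hi2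
    have hlb1 : (tmax - α) * p α ≤ ∫ t in α..tmax, p t := by
      refine const_le_integral' h1.le hi1 ?_
      intro t ht
      exact hmono ⟨hα, h1.le⟩ ⟨le_trans hα ht.1, ht.2⟩ ht.1
    have hlb2 : (β - tmax) * p β ≤ ∫ t in tmax..β, p t := by
      refine const_le_integral' h2.le hi2 ?_
      intro t ht
      exact hanti ⟨ht.1, le_trans ht.2 hβ⟩ ⟨h2.le, hβ⟩ ht.2
    have e1 : (tmax - α) * m ≤ (tmax - α) * p α :=
      mul_le_mul_of_nonneg_left hmα (by linarith)
    have e2 : (β - tmax) * m ≤ (β - tmax) * p β :=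
      mul_le_mul_of_nonneg_left hmβ (by linarith)
    nlinarith [hlb1, hlb2, hsplit]
end

section
/- For the n-dimensional standard Cauchy distribution with density proportional to (1+‖x‖²)^{-(n+1)/2}, and any t > 0, the probability that ‖x‖ ≥ t is at most 2√(2n)/t. In particular, P(‖x‖ ≥ 2√(2n)/ε) ≤ ε for all ε > 0. -/
open MeasureTheory Set

namespace CauchyAux

-- computation lemma
lemma comp_aux {n : ℕ} (hn : 1 ≤ n) {r : ℝ} (hr : 0 < r) :
    r ^ (n - 1) * (r ^ 2) ^ (-((n:ℝ) + 1) / 2) = r ^ (-2 : ℝ) := by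
  have h1 : r ^ (n-1) = r ^ ((n:ℝ) - 1) := by
    rw [← Real.rpow_natCast r (n-1), Nat.cast_sub hn, Nat.cast_one]
  have h2 : (r ^ 2 : ℝ) ^ (-((n:ℝ) + 1) / 2) = r ^ (-((n:ℝ)+1)) := by
    rw [← Real.rpow_natCast r 2, ← Real.rpow_mul hr.le]
    congr 1
    push_cast
    ring
  rw [h1, h2, ← Real.rpow_add hr]
  congr 1
  ring

lemma key_upper {n : ℕ} (hn : 1 ≤ n) {r : ℝ} (hr : 0 < r) :
    r ^ (n - 1) * (1 + r ^ 2) ^ (-((n:ℝ) + 1) / 2) ≤ r ^ (-2 : ℝ) := by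
  have h1 : (1 + r ^ 2) ^ (-((n:ℝ) + 1) / 2) ≤ (r ^ 2) ^ (-((n:ℝ) + 1) / 2) :=
    Real.rpow_le_rpow_of_nonpos (by positivity) (by nlinarith)
      (by have h : (0:ℝ) ≤ (n:ℝ) := Nat.cast_nonneg n; linarith)
  calc r ^ (n - 1) * (1 + r ^ 2) ^ (-((n:ℝ) + 1) / 2)
      ≤ r ^ (n - 1) * (r ^ 2) ^ (-((n:ℝ) + 1) / 2) :=
        mul_le_mul_of_nonneg_left h1 (pow_nonneg hr.le _)
    _ = r ^ (-2 : ℝ) := comp_aux hn hr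

lemma aux_exp {n : ℕ} (hn : 1 ≤ n) {r : ℝ} (hr : Real.sqrt n ≤ r) :
    (1 + r ^ 2) ^ (((n:ℝ)+1)/2) ≤ Real.exp 1 * (r ^ 2) ^ (((n:ℝ)+1)/2) := by
  have hn1 : (1:ℝ) ≤ n := by exact_mod_cast hn
  have hr2 : (n:ℝ) ≤ r ^ 2 := by
    nlinarith [Real.sq_sqrt (show (0:ℝ) ≤ n by positivity), Real.sqrt_nonneg (n:ℝ)]
  have hr2pos : 0 < r ^ 2 := by linarith
  have hq : (0:ℝ) ≤ ((n:ℝ)+1)/2 := by positivity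
  rw [Real.rpow_def_of_pos (by linarith), Real.rpow_def_of_pos hr2pos, ← Real.exp_add]
  apply Real.exp_le_exp.mpr
  have hlog : Real.log (1 + r ^ 2) - Real.log (r ^ 2) = Real.log ((1 + r ^ 2)/r ^ 2) :=
    (Real.log_div (by linarith) (ne_of_gt hr2pos)).symm
  have h1 : Real.log ((1 + r ^ 2)/r ^ 2) ≤ 1/r ^ 2 := by
    have hx := Real.log_le_sub_one_of_pos (show 0 < (1 + r ^ 2)/r ^ 2 by positivity)
    have hy : (1 + r ^ 2)/r ^ 2 - 1 = 1/r ^ 2 := by rw [div_sub_one hr2pos.ne']; ring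
    linarith
  have h3 : (1:ℝ)/r ^ 2 ≤ 1/(n:ℝ) := one_div_le_one_div_of_le (by linarith) hr2
  have h4 : ((n:ℝ)+1)/2 * (1/(n:ℝ)) ≤ 1 := by
    rw [mul_one_div, div_div, div_le_one (by positivity)]
    linarith
  have h5 : ((n:ℝ)+1)/2 * Real.log ((1 + r ^ 2)/r ^ 2) ≤ ((n:ℝ)+1)/2 * (1/r ^ 2) :=
    mul_le_mul_of_nonneg_left h1 hq
  have h6 : ((n:ℝ)+1)/2 * (1/r ^ 2) ≤ ((n:ℝ)+1)/2 * (1/(n:ℝ)) :=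
    mul_le_mul_of_nonneg_left h3 hq
  nlinarith [hlog]

lemma lower_pt {n : ℕ} (hn : 1 ≤ n) {r : ℝ} (hr : Real.sqrt n ≤ r) :
    (Real.exp 1)⁻¹ * r ^ (-2:ℝ) ≤ r ^ (n - 1) * (1 + r ^ 2) ^ (-((n:ℝ) + 1) / 2) := by
  have hn0 : (0:ℝ) < n := by exact_mod_cast hn.trans_lt' Nat.zero_lt_one
  have hrpos : 0 < r := lt_of_lt_of_le (Real.sqrt_pos.mpr hn0) hr
  have hbase : (0:ℝ) < 1 + r ^ 2 := by positivity
  have key : (Real.exp 1)⁻¹ * (r ^ 2) ^ (-((n:ℝ)+1)/2) ≤ (1 + r ^ 2) ^ (-((n:ℝ)+1)/2) := by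
    rw [show -((n:ℝ)+1)/2 = -(((n:ℝ)+1)/2) by ring, Real.rpow_neg (by positivity),
      Real.rpow_neg hbase.le, ← mul_inv]
    exact inv_anti₀ (Real.rpow_pos_of_pos hbase _) (aux_exp hn hr)
  calc (Real.exp 1)⁻¹ * r ^ (-2:ℝ)
      = r ^ (n-1) * ((Real.exp 1)⁻¹ * (r ^ 2) ^ (-((n:ℝ)+1)/2)) := by
        rw [← comp_aux hn hrpos]; ring
    _ ≤ r ^ (n-1) * (1 + r ^ 2) ^ (-((n:ℝ)+1)/2) :=
        mul_le_mul_of_nonneg_left key (pow_nonneg hrpos.le _)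

lemma cont_h (n : ℕ) :
    Continuous (fun r : ℝ => r ^ (n - 1) * (1 + r ^ 2) ^ (-((n:ℝ) + 1) / 2)) :=
  (continuous_pow _).mul
    ((continuous_const.add (continuous_pow 2)).rpow_const (fun x => Or.inl (by positivity : (0:ℝ) < 1 + x ^ 2).ne'))

lemma integrable_h {n : ℕ} (hn : 1 ≤ n) :
    IntegrableOn (fun r : ℝ => r ^ (n - 1) * (1 + r ^ 2) ^ (-((n:ℝ) + 1) / 2)) (Ioi 0) := by
  have h1 : IntegrableOn (fun r : ℝ => r ^ (n - 1) * (1 + r ^ 2) ^ (-((n:ℝ) + 1) / 2)) (Ioc 0 1) :=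
    ((cont_h n).integrableOn_Icc (a := 0) (b := 1)).mono_set Ioc_subset_Icc_self
  have h2 : IntegrableOn (fun r : ℝ => r ^ (n - 1) * (1 + r ^ 2) ^ (-((n:ℝ) + 1) / 2)) (Ioi 1) := by
    apply Integrable.mono' (integrableOn_Ioi_rpow_of_lt (by norm_num : (-2:ℝ) < -1) one_pos)
      (cont_h n).aestronglyMeasurable.restrict
    filter_upwards [ae_restrict_mem measurableSet_Ioi] with r hr
    have hrpos : (0:ℝ) < r := lt_trans one_pos hr
    rw [Real.norm_eq_abs, abs_of_nonneg (mul_nonneg (pow_nonneg hrpos.le _) (Real.rpow_nonneg (by positivity) _))]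
    exact key_upper hn hrpos
  have := h1.union h2
  rwa [Ioc_union_Ioi_eq_Ioi (le_of_lt one_pos)] at this

lemma tail_le {n : ℕ} (hn : 1 ≤ n) {t : ℝ} (ht : 0 < t) :
    ∫ r in Ioi (0:ℝ),
      r ^ (n - 1) * (Ici t).indicator (fun s => (1 + s ^ 2) ^ (-((n:ℝ) + 1) / 2)) r ≤ 1/t := by
  have e1 : (fun r : ℝ => r ^ (n - 1) * (Ici t).indicator (fun s => (1 + s ^ 2) ^ (-((n:ℝ) + 1) / 2)) r)
      = (Ici t).indicator (fun r => r ^ (n - 1) * (1 + r ^ 2) ^ (-((n:ℝ) + 1) / 2)) := by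
    funext r
    by_cases hr : r ∈ Ici t <;> simp [hr]
  have hinter : Ici t ∩ Ioi (0:ℝ) = Ici t :=
    inter_eq_self_of_subset_left (fun x hx => lt_of_lt_of_le ht hx)
  rw [e1, integral_indicator measurableSet_Ici, Measure.restrict_restrict measurableSet_Ici,
    hinter, integral_Ici_eq_integral_Ioi]
  calc ∫ r in Ioi t, r ^ (n - 1) * (1 + r ^ 2) ^ (-((n:ℝ) + 1) / 2)
      ≤ ∫ r in Ioi t, r ^ (-2:ℝ) := by
        apply integral_mono_of_nonneg
        · filter_upwards [ae_restrict_mem measurableSet_Ioi] with r hr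
          exact mul_nonneg (pow_nonneg (ht.trans hr).le _) (Real.rpow_nonneg (by positivity) _)
        · exact integrableOn_Ioi_rpow_of_lt (by norm_num) ht
        · filter_upwards [ae_restrict_mem measurableSet_Ioi] with r hr
          exact key_upper hn (ht.trans hr)
    _ = 1/t := by
        rw [integral_Ioi_rpow_of_lt (by norm_num) ht]
        norm_num [Real.rpow_neg_one]

lemma denom_lower {n : ℕ} (hn : 1 ≤ n) :
    1/(2 * Real.sqrt (2*n)) ≤
      ∫ r in Ioi (0:ℝ), r ^ (n - 1) * (1 + r ^ 2) ^ (-((n:ℝ) + 1) / 2) := by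
  have hn0 : (0:ℝ) < n := by exact_mod_cast hn.trans_lt' Nat.zero_lt_one
  have hs : 0 < Real.sqrt n := Real.sqrt_pos.mpr hn0
  have int0 := integrable_h hn
  have step1 : ∫ r in Ioi (Real.sqrt n), r ^ (n - 1) * (1 + r ^ 2) ^ (-((n:ℝ) + 1) / 2)
      ≤ ∫ r in Ioi (0:ℝ), r ^ (n - 1) * (1 + r ^ 2) ^ (-((n:ℝ) + 1) / 2) := by
    apply setIntegral_mono_set int0
    · filter_upwards [ae_restrict_mem measurableSet_Ioi] with r hr
      exact mul_nonneg (pow_nonneg (le_of_lt hr) _) (Real.rpow_nonneg (by positivity) _)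
    · exact (Ioi_subset_Ioi hs.le).eventuallyLE
  have step2 : ∫ r in Ioi (Real.sqrt n), (Real.exp 1)⁻¹ * r ^ (-2:ℝ)
      ≤ ∫ r in Ioi (Real.sqrt n), r ^ (n - 1) * (1 + r ^ 2) ^ (-((n:ℝ) + 1) / 2) := by
    apply setIntegral_mono_on
      ((integrableOn_Ioi_rpow_of_lt (by norm_num) hs).const_mul _)
      (int0.mono_set (Ioi_subset_Ioi hs.le)) measurableSet_Ioi
    exact fun r hr => lower_pt hn (le_of_lt hr)
  have step3 : ∫ r in Ioi (Real.sqrt n), (Real.exp 1)⁻¹ * r ^ (-2:ℝ)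
      = (Real.exp 1)⁻¹ * (Real.sqrt n)⁻¹ := by
    rw [integral_const_mul, integral_Ioi_rpow_of_lt (by norm_num) hs]
    norm_num [Real.rpow_neg_one]
  have final : 1/(2 * Real.sqrt (2*n)) ≤ (Real.exp 1)⁻¹ * (Real.sqrt n)⁻¹ := by
    rw [show ((2:ℝ)*n) = 2 * n by ring, Real.sqrt_mul (by norm_num : (0:ℝ) ≤ 2),
      show (Real.exp 1)⁻¹ * (Real.sqrt n)⁻¹ = 1/(Real.exp 1 * Real.sqrt n) by
        rw [one_div, mul_inv]]
    apply one_div_le_one_div_of_le (by positivity)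
    have h2s : Real.exp 1 ≤ 2 * Real.sqrt 2 := by
      nlinarith [Real.exp_one_lt_d9, Real.sq_sqrt (show (0:ℝ) ≤ 2 by norm_num),
        Real.sqrt_nonneg (2:ℝ), sq_nonneg (Real.sqrt 2 - 1.41)]
    nlinarith [h2s, hs.le, Real.exp_pos 1]
  linarith

lemma main (n : ℕ) (hn : 1 ≤ n) (t : ℝ) (ht : 0 < t) :
    (∫ x in {x : EuclideanSpace ℝ (Fin n) | t ≤ ‖x‖},
        (1 + ‖x‖ ^ 2) ^ (-((n:ℝ) + 1) / 2)) /
      (∫ x : EuclideanSpace ℝ (Fin n), (1 + ‖x‖ ^ 2) ^ (-((n:ℝ) + 1) / 2)) ≤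
      2 * Real.sqrt (2 * n) / t := by
  have hn0 : (0:ℝ) < n := by exact_mod_cast hn.trans_lt' Nat.zero_lt_one
  haveI : Nontrivial (EuclideanSpace ℝ (Fin n)) :=
    Module.nontrivial_of_finrank_pos (R := ℝ)
      (by rw [finrank_euclideanSpace_fin]; exact hn)
  have hset : MeasurableSet {x : EuclideanSpace ℝ (Fin n) | t ≤ ‖x‖} :=
    (isClosed_le continuous_const continuous_norm).measurableSet
  have e1 : {x : EuclideanSpace ℝ (Fin n) | t ≤ ‖x‖}.indicator
      (fun x => (1 + ‖x‖ ^ 2) ^ (-((n:ℝ) + 1) / 2))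
      = fun x => (Ici t).indicator (fun s => (1 + s ^ 2) ^ (-((n:ℝ) + 1) / 2)) ‖x‖ := by
    funext x
    by_cases hx : t ≤ ‖x‖ <;> simp [hx]
  have hnum := integral_fun_norm_addHaar (volume : Measure (EuclideanSpace ℝ (Fin n)))
    ((Ici t).indicator (fun s => (1 + s ^ 2) ^ (-((n:ℝ) + 1) / 2)))
  have hden := integral_fun_norm_addHaar (volume : Measure (EuclideanSpace ℝ (Fin n)))
    (fun s : ℝ => (1 + s ^ 2) ^ (-((n:ℝ) + 1) / 2))
  simp only [finrank_euclideanSpace_fin, nsmul_eq_mul, smul_eq_mul] at hnum hden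
  rw [← integral_indicator hset, e1, hnum, hden]
  have hc : 0 < (n:ℝ) * volume.real (Metric.ball (0:EuclideanSpace ℝ (Fin n)) 1) :=
    mul_pos hn0 (ENNReal.toReal_pos (Metric.measure_ball_pos volume 0 one_pos).ne'
      measure_ball_lt_top.ne)
  rw [← mul_assoc, ← mul_assoc, mul_div_mul_left _ _ hc.ne']
  calc (∫ y in Ioi (0:ℝ), y ^ (n-1) * (Ici t).indicator (fun s => (1 + s ^ 2) ^ (-((n:ℝ) + 1) / 2)) y) /
        (∫ y in Ioi (0:ℝ), y ^ (n-1) * (1 + y ^ 2) ^ (-((n:ℝ) + 1) / 2))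
      ≤ (1/t) / (1/(2 * Real.sqrt (2*n))) := by
        apply div_le_div₀ (by positivity) (tail_le hn ht)
        · have : 0 < Real.sqrt (2*n) := Real.sqrt_pos.mpr (by positivity)
          positivity
        · exact denom_lower hn
    _ = 2 * Real.sqrt (2*n) / t := by
        rw [div_div_eq_mul_div, div_one, one_div, inv_mul_eq_div]

end CauchyAux

open MeasureTheory

theorem cauchy_large_ball_probability (n : ℕ) (hn : 1 ≤ n) (t : ℝ) (ht : 0 < t) :
    (∫ x in {x : EuclideanSpace ℝ (Fin n) | t ≤ ‖x‖},
        (1 + ‖x‖ ^ 2) ^ (-((n:ℝ) + 1) / 2)) /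
      (∫ x : EuclideanSpace ℝ (Fin n), (1 + ‖x‖ ^ 2) ^ (-((n:ℝ) + 1) / 2)) ≤
      2 * Real.sqrt (2 * n) / t ∧
    ∀ ε : ℝ, 0 < ε →
      (∫ x in {x : EuclideanSpace ℝ (Fin n) | 2 * Real.sqrt (2 * n) / ε ≤ ‖x‖},
          (1 + ‖x‖ ^ 2) ^ (-((n:ℝ) + 1) / 2)) /
        (∫ x : EuclideanSpace ℝ (Fin n), (1 + ‖x‖ ^ 2) ^ (-((n:ℝ) + 1) / 2)) ≤ ε := by
  refine ⟨CauchyAux.main n hn t ht, fun ε hε => ?_⟩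
  have hn0 : (0:ℝ) < n := by exact_mod_cast hn.trans_lt' Nat.zero_lt_one
  have hs : 0 < Real.sqrt (2*n) := Real.sqrt_pos.mpr (by positivity)
  have ht0 : 0 < 2 * Real.sqrt (2*n) / ε := by positivity
  have h := CauchyAux.main n hn _ ht0
  have h2 : 2 * Real.sqrt (2*n) / (2 * Real.sqrt (2*n) / ε) = ε := by
    field_simp
  rwa [h2] at h
end

section
/- Let f(x) = c(1+‖x‖²)^{-(n+1)/2} be the n-dimensional Cauchy density (c > 0 a constant). Let x ∈ ℝⁿ, r > 0, and let y ∈ ℝⁿ satisfy ‖x−y‖ ≤ r and |x·(x−y)| ≤ 4r‖x‖/√n. Then f(x)/f(y) ≥ 1 − 4r√n, provided r ≤ 1/√n. -/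
set_option maxHeartbeats 1000000


open scoped RealInnerProductSpace

theorem cauchy_smoothness (n : ℕ) (hn : 1 ≤ n) (c : ℝ) (hc : 0 < c)
    (f : EuclideanSpace ℝ (Fin n) → ℝ)
    (hf : ∀ x, f x = c * (1 + ‖x‖ ^ 2) ^ (-((n:ℝ) + 1) / 2))
    (r : ℝ) (hr : 0 < r) (hrn : r ≤ 1 / Real.sqrt n)
    (x y : EuclideanSpace ℝ (Fin n)) (hxy : ‖x - y‖ ≤ r)
    (hdot : |⟪x, x - y⟫| ≤ 4 * r * ‖x‖ / Real.sqrt n) :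
    1 - 4 * r * Real.sqrt n ≤ f x / f y := by
  set a : ℝ := ‖x‖ with ha
  set b : ℝ := ‖y‖ with hb
  clear_value a b
  have hna : (0:ℝ) < n := by exact_mod_cast Nat.lt_of_lt_of_le Nat.zero_lt_one hn
  have ht1 : 1 ≤ Real.sqrt n := by
    rw [show (1:ℝ) = Real.sqrt 1 by simp]
    exact Real.sqrt_le_sqrt (by exact_mod_cast hn)
  have ht0 : (0:ℝ) < Real.sqrt n := lt_of_lt_of_le one_pos ht1
  have htsq : Real.sqrt n ^ 2 = n := Real.sq_sqrt (le_of_lt hna)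
  have hpa : (0:ℝ) < 1 + a ^ 2 := by positivity
  have hpb : (0:ℝ) < 1 + b ^ 2 := by positivity
  set p : ℝ := ((n:ℝ) + 1) / 2 with hp
  clear_value p
  have hp1 : 1 ≤ p := by
    rw [hp]
    have : (1:ℝ) ≤ n := by exact_mod_cast hn
    linarith
  -- f x / f y = ((1+b^2)/(1+a^2))^p
  have hratio : f x / f y = ((1 + b ^ 2) / (1 + a ^ 2)) ^ p := by
    rw [hf x, hf y, ← ha, ← hb, Real.div_rpow (le_of_lt hpb) (le_of_lt hpa)]
    rw [show -((n:ℝ) + 1) / 2 = -p by rw [hp]; ring]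
    rw [Real.rpow_neg (le_of_lt hpa), Real.rpow_neg (le_of_lt hpb)]
    field_simp
  have hfy0 : 0 ≤ f x / f y := by
    rw [hratio]; positivity
  by_cases hcase : 1 - 4 * r * Real.sqrt n ≤ 0
  · linarith
  push_neg at hcase
  -- key norm identity
  have hnorm : b ^ 2 = a ^ 2 - 2 * ⟪x, x - y⟫ + ‖x - y‖ ^ 2 := by
    have := @norm_sub_sq_real (EuclideanSpace ℝ (Fin n)) _ _ x (x - y)
    simp only [sub_sub_cancel] at this
    rw [hb, ha, this]
  have hkey : a ^ 2 - 8 * r * a / Real.sqrt n ≤ b ^ 2 := by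
    have h1 : ⟪x, x - y⟫ ≤ 4 * r * a / Real.sqrt n := le_trans (le_abs_self _) hdot
    have h2 : (0:ℝ) ≤ ‖x - y‖ ^ 2 := sq_nonneg _
    rw [hnorm]
    have : 8 * r * a / Real.sqrt n = 2 * (4 * r * a / Real.sqrt n) := by ring
    rw [this]
    linarith
  set s : ℝ := 4 * r / Real.sqrt n with hs
  have hs0 : 0 < s := by positivity
  -- s ≤ 4 r √n < 1
  have hsle : s ≤ 4 * r * Real.sqrt n := by
    rw [hs, div_le_iff₀ ht0]
    nlinarith
  have hs1 : s < 1 := by linarith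
  -- (1-s)(1+a^2) ≤ 1+b^2
  have hdivkey : 1 - s ≤ (1 + b ^ 2) / (1 + a ^ 2) := by
    rw [le_div_iff₀ hpa]
    have h2a : 2 * a ≤ 1 + a ^ 2 := by nlinarith [sq_nonneg (a - 1)]
    have hfrac : 8 * r * a / Real.sqrt n ≤ s * (1 + a ^ 2) := by
      rw [hs, div_mul_eq_mul_div, div_le_div_iff₀ ht0 ht0]
      have := mul_le_mul_of_nonneg_left h2a (by positivity : (0:ℝ) ≤ 4 * r * Real.sqrt n)
      nlinarith
    have hexp : (1 - s) * (1 + a ^ 2) = 1 + a ^ 2 - s * (1 + a ^ 2) := by ring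
    linarith [hkey]
  have hbern : 1 - p * s ≤ (1 - s) ^ p := by
    have := one_add_mul_self_le_rpow_one_add (s := -s) (by linarith) hp1
    simpa [sub_eq_add_neg, mul_neg] using this
  have hmono : (1 - s) ^ p ≤ ((1 + b ^ 2) / (1 + a ^ 2)) ^ p :=
    Real.rpow_le_rpow (by linarith) hdivkey (by linarith)
  have hfinal : 1 - 4 * r * Real.sqrt n ≤ 1 - p * s := by
    have : p * s ≤ 4 * r * Real.sqrt n := by
      rw [hp, hs]
      rw [div_mul_div_comm, div_le_iff₀ (by positivity)]
      have hn1 : (1:ℝ) ≤ n := by exact_mod_cast hn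
      have h2 : 4 * r * Real.sqrt n * (2 * Real.sqrt n) = 8 * r * n := by
        rw [show 4 * r * Real.sqrt n * (2 * Real.sqrt n) = 8 * r * Real.sqrt n ^ 2 by ring, htsq]
      have h1 : ((n:ℝ) + 1) * (4 * r) ≤ 2 * n * (4 * r) :=
        mul_le_mul_of_nonneg_right (by linarith) (by positivity)
      linarith
    linarith
  rw [hratio]
  linarith
end
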